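/- If E ⊆ ℝⁿ is a convex body and e is a unit vector, then the marginal w_e(x) = ∫_ℝ 1_E(x + t e) dt, defined on the hyperplane e^⊥, is log-concave, i.e. w_e(λx + (1−λ)y) ≥ w_e(x)^λ w_e(y)^(1−λ) for all x, y ∈ e^⊥ and λ ∈ [0,1]. -/

import Mathlib

open MeasureTheory Set

/-- The marginal of a set `E ⊆ ℝⁿ` in direction `e`, evaluated at `x`:
the one-dimensional Lebesgue measure of the slice `{t : x + t e ∈ E}`. -/
noncomputable def marginal {n : ℕ} (E : Set (EuclideanSpace ℝ (Fin n)))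
    (e : EuclideanSpace ℝ (Fin n)) (x : EuclideanSpace ℝ (Fin n)) : ℝ :=
  (volume {t : ℝ | x + t • e ∈ E}).toReal

lemma slice_convex {n : ℕ} {E : Set (EuclideanSpace ℝ (Fin n))} (hEc : Convex ℝ E)
    (e x : EuclideanSpace ℝ (Fin n)) : Convex ℝ {t : ℝ | x + t • e ∈ E} := by
  intro t ht s hs a b ha hb hab
  have h := hEc ht hs ha hb hab
  have hb1 : b = 1 - a := by linarith
  subst hb1
  have heq : x + (a • t + (1 - a) • s) • e = a • (x + t • e) + (1 - a) • (x + s • e) := by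
    rw [smul_eq_mul, smul_eq_mul]; module
  show x + (a • t + (1 - a) • s) • e ∈ E
  rw [heq]; exact h

lemma slice_bdd {n : ℕ} {E : Set (EuclideanSpace ℝ (Fin n))} (hEb : Bornology.IsBounded E)
    (e x : EuclideanSpace ℝ (Fin n)) (he : ‖e‖ = 1) :
    BddAbove {t : ℝ | x + t • e ∈ E} ∧ BddBelow {t : ℝ | x + t • e ∈ E} := by
  obtain ⟨R, hR⟩ := hEb.exists_norm_le
  have key : ∀ t ∈ {t : ℝ | x + t • e ∈ E}, |t| ≤ R + ‖x‖ := by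
    intro t ht
    have h1 : ‖x + t • e‖ ≤ R := hR _ ht
    have h2 : ‖t • e‖ = |t| := by rw [norm_smul, he, Real.norm_eq_abs, mul_one]
    have h3 : ‖t • e‖ ≤ ‖x + t • e‖ + ‖x‖ := by
      have h4 : (x + t • e) - x = t • e := by abel
      calc ‖t • e‖ = ‖(x + t • e) - x‖ := by rw [h4]
        _ ≤ ‖x + t • e‖ + ‖x‖ := norm_sub_le _ _
    linarith [h2 ▸ h3]
  constructor
  · exact ⟨R + ‖x‖, fun t ht => (abs_le.mp (key t ht)).2⟩
  · exact ⟨-(R + ‖x‖), fun t ht => (abs_le.mp (key t ht)).1⟩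

lemma vol_convex_bdd (A : Set ℝ) (hA : Convex ℝ A) (hne : A.Nonempty)
    (hub : BddAbove A) (hlb : BddBelow A) :
    volume A = ENNReal.ofReal (sSup A - sInf A) := by
  apply le_antisymm
  · calc volume A ≤ volume (Set.Icc (sInf A) (sSup A)) := by
          apply measure_mono
          intro a ha
          exact ⟨csInf_le hlb ha, le_csSup hub ha⟩
      _ = ENNReal.ofReal (sSup A - sInf A) := Real.volume_Icc
  · calc ENNReal.ofReal (sSup A - sInf A) = volume (Set.Ioo (sInf A) (sSup A)) :=
          (Real.volume_Ioo).symm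
      _ ≤ volume A := by
          apply measure_mono
          intro t ht
          obtain ⟨a, ha, hat⟩ := exists_lt_of_csInf_lt hne ht.1
          obtain ⟨b, hb, htb⟩ := exists_lt_of_lt_csSup hne ht.2
          exact hA.ordConnected.out ha hb ⟨hat.le, htb.le⟩

/-- If `E ⊆ ℝⁿ` is a convex body (bounded convex set with nonempty interior) and `e` is a
unit vector, then the marginal `w_e` is log-concave on the hyperplane `e^⊥`. -/
theorem marginal_logConcave_of_convex {n : ℕ}
    (E : Set (EuclideanSpace ℝ (Fin n))) (hEb : Bornology.IsBounded E)
    (hEc : Convex ℝ E) (hEi : (interior E).Nonempty)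
    (e : EuclideanSpace ℝ (Fin n)) (he : ‖e‖ = 1)
    (x y : EuclideanSpace ℝ (Fin n)) (hx : inner ℝ e x = (0 : ℝ)) (hy : inner ℝ e y = (0 : ℝ))
    (lam : ℝ) (hlam0 : 0 ≤ lam) (hlam1 : lam ≤ 1) :
    marginal E e (lam • x + (1 - lam) • y) ≥
      (marginal E e x) ^ lam * (marginal E e y) ^ (1 - lam) := by
  -- trivial endpoint cases
  rcases eq_or_lt_of_le hlam0 with h0 | hlam0'
  · subst h0
    simp [marginal]
  rcases eq_or_lt_of_le hlam1 with h1 | hlam1'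
  · subst h1
    simp [marginal]
  have hmu : 0 < 1 - lam := by linarith
  set z := lam • x + (1 - lam) • y with hz
  set A := {t : ℝ | x + t • e ∈ E} with hA
  set B := {t : ℝ | y + t • e ∈ E} with hB
  set C := {t : ℝ | z + t • e ∈ E} with hC
  have hmargx : marginal E e x = (volume A).toReal := rfl
  have hmargy : marginal E e y = (volume B).toReal := rfl
  have hmargz : marginal E e z = (volume C).toReal := rfl
  -- degenerate cases where a marginal vanishes
  by_cases hAz : marginal E e x = 0
  · rw [hAz, Real.zero_rpow (ne_of_gt hlam0'), zero_mul]
    exact ENNReal.toReal_nonneg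
  by_cases hBz : marginal E e y = 0
  · rw [hBz, Real.zero_rpow (ne_of_gt hmu), mul_zero]
    exact ENNReal.toReal_nonneg
  -- A, B are nonempty
  have hAne : A.Nonempty := by
    by_contra h
    rw [Set.not_nonempty_iff_eq_empty] at h
    exact hAz (by rw [hmargx, h, measure_empty, ENNReal.toReal_zero])
  have hBne : B.Nonempty := by
    by_contra h
    rw [Set.not_nonempty_iff_eq_empty] at h
    exact hBz (by rw [hmargy, h, measure_empty, ENNReal.toReal_zero])
  obtain ⟨hAub, hAlb⟩ := slice_bdd hEb e x he
  obtain ⟨hBub, hBlb⟩ := slice_bdd hEb e y he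
  obtain ⟨hCub, hClb⟩ := slice_bdd hEb e z he
  have hAcv := slice_convex hEc e x
  have hBcv := slice_convex hEc e y
  have hCcv := slice_convex hEc e z
  -- the key combination property
  have key : ∀ a ∈ A, ∀ b ∈ B, lam * a + (1 - lam) * b ∈ C := by
    intro a ha b hb
    have h : lam • (x + a • e) + (1 - lam) • (y + b • e) ∈ E :=
      hEc ha hb hlam0 (by linarith) (by ring)
    have heq : z + (lam * a + (1 - lam) * b) • e =
        lam • (x + a • e) + (1 - lam) • (y + b • e) := by
      rw [hz]; module
    show z + (lam * a + (1 - lam) * b) • e ∈ E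
    rw [heq]; exact h
  have hCne : C.Nonempty := by
    obtain ⟨a, ha⟩ := hAne
    obtain ⟨b, hb⟩ := hBne
    exact ⟨_, key a ha b hb⟩
  -- sup inequality
  have hsup : lam * sSup A + (1 - lam) * sSup B ≤ sSup C := by
    have h1 : ∀ b ∈ B, lam * sSup A + (1 - lam) * b ≤ sSup C := by
      intro b hb
      have : sSup A ≤ (sSup C - (1 - lam) * b) / lam := by
        apply csSup_le hAne
        intro a ha
        have := le_csSup hCub (key a ha b hb)
        rw [le_div_iff₀ hlam0']
        nlinarith
      rw [le_div_iff₀ hlam0'] at this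
      nlinarith
    have : sSup B ≤ (sSup C - lam * sSup A) / (1 - lam) := by
      apply csSup_le hBne
      intro b hb
      rw [le_div_iff₀ hmu]
      nlinarith [h1 b hb]
    rw [le_div_iff₀ hmu] at this
    nlinarith
  -- inf inequality
  have hinf : sInf C ≤ lam * sInf A + (1 - lam) * sInf B := by
    have h1 : ∀ b ∈ B, sInf C ≤ lam * sInf A + (1 - lam) * b := by
      intro b hb
      have : (sInf C - (1 - lam) * b) / lam ≤ sInf A := by
        apply le_csInf hAne
        intro a ha
        have := csInf_le hClb (key a ha b hb)
        rw [div_le_iff₀ hlam0']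
        nlinarith
      rw [div_le_iff₀ hlam0'] at this
      nlinarith
    have : (sInf C - lam * sInf A) / (1 - lam) ≤ sInf B := by
      apply le_csInf hBne
      intro b hb
      rw [div_le_iff₀ hmu]
      nlinarith [h1 b hb]
    rw [div_le_iff₀ hmu] at this
    nlinarith
  -- volume computations
  have hiA : sInf A ≤ sSup A := csInf_le_csSup hAne hAlb hAub
  have hiB : sInf B ≤ sSup B := csInf_le_csSup hBne hBlb hBub
  have hiC : sInf C ≤ sSup C := csInf_le_csSup hCne hClb hCub
  have hvA : marginal E e x = sSup A - sInf A := by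
    rw [hmargx, vol_convex_bdd A hAcv hAne hAub hAlb, ENNReal.toReal_ofReal (by linarith)]
  have hvB : marginal E e y = sSup B - sInf B := by
    rw [hmargy, vol_convex_bdd B hBcv hBne hBub hBlb, ENNReal.toReal_ofReal (by linarith)]
  have hvC : marginal E e z = sSup C - sInf C := by
    rw [hmargz, vol_convex_bdd C hCcv hCne hCub hClb, ENNReal.toReal_ofReal (by linarith)]
  have hAnn : 0 ≤ marginal E e x := by rw [hvA]; linarith
  have hBnn : 0 ≤ marginal E e y := by rw [hvB]; linarith
  have hgm := Real.geom_mean_le_arith_mean2_weighted hlam0 (by linarith : (0:ℝ) ≤ 1 - lam)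
    hAnn hBnn (by ring)
  have : lam * marginal E e x + (1 - lam) * marginal E e y ≤ marginal E e z := by
    rw [hvA, hvB, hvC]; nlinarith
  calc marginal E e x ^ lam * marginal E e y ^ (1 - lam)
      ≤ lam * marginal E e x + (1 - lam) * marginal E e y := hgm
    _ ≤ marginal E e z := this
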